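/- If the structural constants satisfy Σ_{j} a i j * a j k = 0 for all i,k ∈ Fin n and b i = 0 for all i ∈ Fin n, then every triple product in the EACP C(a,b) vanishes: (x·y)·z = 0 and x·(y·z) = 0 for all x,y,z ∈ C. -/

import Mathlib

/-- Multiplication of the evolution algebra of a "chicken" population `C(a,b)`
on the space `(Fin n → K) × K`. -/
def eacpMul {K : Type*} [Field K] {n : ℕ} (a : Fin n → Fin n → K) (b : Fin n → K)
    (p q : (Fin n → K) × K) : (Fin n → K) × K :=
  ((1 / 2 : K) • (fun j => ∑ i, (q.2 * p.1 i + p.2 * q.1 i) * a i j),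
   (1 / 2 : K) * ∑ i, (q.2 * p.1 i + p.2 * q.1 i) * b i)

theorem eacp_triple_products_vanish {K : Type*} [Field K] (h2 : (2 : K) ≠ 0)
    {n : ℕ} (hn : 1 ≤ n) (a : Fin n → Fin n → K) (b : Fin n → K)
    (ha : ∀ i k : Fin n, ∑ j, a i j * a j k = 0) (hb : ∀ i : Fin n, b i = 0) :
    ∀ x y z : (Fin n → K) × K,
      eacpMul a b (eacpMul a b x y) z = 0 ∧ eacpMul a b x (eacpMul a b y z) = 0 := by
  have key : ∀ (c : Fin n → K) (k : Fin n), ∑ j, (∑ i, c i * a i j) * a j k = 0 := by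
    intro c k
    simp only [Finset.sum_mul]
    rw [Finset.sum_comm]
    simp [mul_assoc, ← Finset.mul_sum, ha]
  have key2 : ∀ (c : Fin n → K) (u : K) (k : Fin n),
      ∑ j, a j k * (u * (1 / 2 * ∑ i, a i j * c i)) = 0 := by
    intro c u k
    rw [← key (fun i => u * (1 / 2) * c i) k]
    refine Finset.sum_congr rfl fun j _ => ?_
    simp only [Finset.mul_sum, Finset.sum_mul]
    exact Finset.sum_congr rfl fun i _ => by ring
  intro x y z
  constructor <;>
  · simp only [eacpMul, hb, mul_zero, Finset.sum_const_zero, Prod.mk_eq_zero, smul_eq_mul]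
    refine ⟨?_, trivial⟩
    funext k
    simp only [Pi.smul_apply, smul_eq_mul, Pi.zero_apply, mul_zero, zero_mul, add_zero,
      zero_add, mul_comm, mul_assoc, ← Finset.mul_sum]
    rw [key2, mul_zero]
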